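/- arXiv:1503.07827 — 2 statements merged into one kernel-verified Lean document; each statement's English description precedes it below -/
import Mathlib

section
/- With η̃₀, …, η̃ₙ defined as below, the integrability condition holds: for all indices 0 ≤ i, j, k ≤ n, η̃_i·(∂η̃_k/∂z_j − ∂η̃_j/∂z_k) + η̃_j·(∂η̃_i/∂z_k − ∂η̃_k/∂z_i) + η̃_k·(∂η̃_j/∂z_i − ∂η̃_i/∂z_j) = 0 in ℂ[z₀,…,zₙ]. -/
open MvPolynomial

lemma pderiv_comm' {σ : Type*} [DecidableEq σ] {R : Type*} [CommRing R]
    (i j : σ) (f : MvPolynomial σ R) :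
    pderiv i (pderiv j f) = pderiv j (pderiv i f) := by
  induction f using MvPolynomial.induction_on' with
  | monomial s a =>
    simp only [pderiv_monomial]
    rcases eq_or_ne i j with rfl | hij
    · rfl
    · have h1 : (s - (Finsupp.single j 1 : σ →₀ ℕ)) i = s i := by
        rw [Finsupp.tsub_apply, Finsupp.single_apply, if_neg hij.symm, Nat.sub_zero]
      have h2 : (s - (Finsupp.single i 1 : σ →₀ ℕ)) j = s j := by
        rw [Finsupp.tsub_apply, Finsupp.single_apply, if_neg hij, Nat.sub_zero]
      rw [h1, h2, tsub_tsub, tsub_tsub, add_comm]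
      ring_nf
  | add p q hp hq => simp [hp, hq]

lemma euler_id {σ : Type*} [Fintype σ] [DecidableEq σ] {R : Type*} [CommRing R]
    {φ : MvPolynomial σ R} {N : ℕ} (h : φ.IsHomogeneous N) :
    ∑ m, X m * pderiv m φ = (N : MvPolynomial σ R) * φ := by
  have key : ∀ (s : σ →₀ ℕ) (a : R), ∑ m, X m * pderiv m (monomial s a)
      = ((Finsupp.degree s : ℕ) : MvPolynomial σ R) * monomial s a := by
    intro s a
    have h1 : ∀ m : σ, X m * pderiv m (monomial s a)
        = (s m : MvPolynomial σ R) * monomial s a := by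
      intro m
      rw [pderiv_monomial]
      rcases Nat.eq_zero_or_pos (s m) with h0 | h0
      · simp [h0]
      · have : (Finsupp.single m 1 : σ →₀ ℕ) ≤ s := by
          rwa [Finsupp.single_le_iff]
        rw [X, monomial_mul, one_mul, add_tsub_cancel_of_le this]
        rw [show ((s m : MvPolynomial σ R)) = C ((s m : ℕ) : R) by simp,
          C_mul_monomial, mul_comm]
    rw [Finset.sum_congr rfl fun m _ => h1 m, ← Finset.sum_mul, ← Nat.cast_sum]
    congr 2
    rw [Finsupp.degree_apply]
    exact (Finset.sum_subset (Finset.subset_univ _) (by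
      intro x _ hx
      simpa using (Finsupp.notMem_support_iff.mp hx))).symm
  conv_lhs => rw [φ.as_sum]
  simp only [map_sum, Finset.mul_sum]
  rw [Finset.sum_comm]
  conv_rhs => rw [φ.as_sum]
  rw [Finset.mul_sum]
  refine Finset.sum_congr rfl fun s hs => ?_
  rw [key]
  congr 2
  have := h (mem_support_iff.mp hs)
  rw [← this, Finsupp.degree_eq_weight_one]; rfl

lemma chain_rule {σ τ : Type*} [Fintype σ] [DecidableEq σ] [DecidableEq τ] {R : Type*} [CommRing R]
    (v : σ → MvPolynomial τ R) (t : τ) (P : MvPolynomial σ R) :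
    pderiv t (aeval v P) = ∑ m, aeval v (pderiv m P) * pderiv t (v m) := by
  induction P using MvPolynomial.induction_on with
  | C a => simp [algebraMap_eq]
  | add p q hp hq =>
    simp only [map_add, hp, hq, add_mul, Finset.sum_add_distrib]
  | mul_X p m hp =>
    have step : ∀ m' : σ, aeval v (pderiv m' (p * X m)) * pderiv t (v m')
        = aeval v (pderiv m' p) * pderiv t (v m') * v m
          + aeval v p * (if m' = m then pderiv t (v m) else 0) := by
      intro m'
      rw [pderiv_mul, pderiv_X, map_add, map_mul, aeval_X]
      rcases eq_or_ne m' m with rfl | hne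
      · rw [if_pos rfl, Pi.single_eq_same]
        ring
      · rw [if_neg hne, Pi.single_eq_of_ne hne.symm]
        simp only [mul_zero, map_zero, zero_mul, add_zero]
        ring
    rw [map_mul, aeval_X, pderiv_mul, hp,
      Finset.sum_congr rfl fun m' _ => step m', Finset.sum_add_distrib]
    congr 1
    · rw [Finset.sum_mul]
    · simp

/-- The `j`-th coefficient of the 1-form
`η̃ = αF₁F₂(A∘F)dF₀ + βF₀F₂(B∘F)dF₁ + γF₀F₁(C∘F)dF₂`,
where `F = (F₀^α, F₁^β, F₂^γ)` and `∘F` denotes substitution of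
`F₀^α, F₁^β, F₂^γ` for the three variables. -/
noncomputable def etaCoeff (n α β γ : ℕ) (A B Cp : MvPolynomial (Fin 3) ℂ)
    (F0 F1 F2 : MvPolynomial (Fin (n + 1)) ℂ) (j : Fin (n + 1)) :
    MvPolynomial (Fin (n + 1)) ℂ :=
  (α : MvPolynomial (Fin (n + 1)) ℂ) * F1 * F2 *
      (aeval ![F0 ^ α, F1 ^ β, F2 ^ γ] A) * pderiv j F0 +
  (β : MvPolynomial (Fin (n + 1)) ℂ) * F0 * F2 *
      (aeval ![F0 ^ α, F1 ^ β, F2 ^ γ] B) * pderiv j F1 +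
  (γ : MvPolynomial (Fin (n + 1)) ℂ) * F0 * F1 *
      (aeval ![F0 ^ α, F1 ^ β, F2 ^ γ] Cp) * pderiv j F2

set_option maxHeartbeats 1600000 in
/-- the integrability condition `η̃ ∧ dη̃ = 0`, coefficientwise. -/
theorem stmt_4 (n d ν α β γ : ℕ) (hn : 3 ≤ n) (hd : 2 ≤ d) (hν : 2 ≤ ν)
    (hα : 1 < α) (hαβ : α < β) (hβγ : β < γ)
    (A B Cp : MvPolynomial (Fin 3) ℂ)
    (hA : A.IsHomogeneous (d - 1)) (hB : B.IsHomogeneous (d - 1))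
    (hC : Cp.IsHomogeneous (d - 1)) (hABC : A + B + Cp = 0)
    (F0 F1 F2 : MvPolynomial (Fin (n + 1)) ℂ) (a b c : ℕ)
    (hF0 : F0.IsHomogeneous a) (hF1 : F1.IsHomogeneous b) (hF2 : F2.IsHomogeneous c)
    (hνa : α * a = ν) (hνb : β * b = ν) (hνc : γ * c = ν) :
    ∀ i j k : Fin (n + 1),
      etaCoeff n α β γ A B Cp F0 F1 F2 i *
          (pderiv j (etaCoeff n α β γ A B Cp F0 F1 F2 k) -
            pderiv k (etaCoeff n α β γ A B Cp F0 F1 F2 j)) +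
        etaCoeff n α β γ A B Cp F0 F1 F2 j *
          (pderiv k (etaCoeff n α β γ A B Cp F0 F1 F2 i) -
            pderiv i (etaCoeff n α β γ A B Cp F0 F1 F2 k)) +
        etaCoeff n α β γ A B Cp F0 F1 F2 k *
          (pderiv i (etaCoeff n α β γ A B Cp F0 F1 F2 j) -
            pderiv j (etaCoeff n α β γ A B Cp F0 F1 F2 i)) = 0 := by
  intro i j k
  obtain ⟨α', rfl⟩ : ∃ t, α = t + 1 := ⟨α - 1, by omega⟩
  obtain ⟨β', rfl⟩ : ∃ t, β = t + 1 := ⟨β - 1, by omega⟩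
  obtain ⟨γ', rfl⟩ : ∃ t, γ = t + 1 := ⟨γ - 1, by omega⟩
  obtain ⟨d', rfl⟩ : ∃ t, d = t + 1 := ⟨d - 1, by omega⟩
  rw [Nat.add_sub_cancel] at hA hB hC
  set vv : Fin 3 → MvPolynomial (Fin (n + 1)) ℂ :=
    ![F0 ^ (α' + 1), F1 ^ (β' + 1), F2 ^ (γ' + 1)] with hvv
  have hv0 : vv 0 = F0 ^ (α' + 1) := rfl
  have hv1 : vv 1 = F1 ^ (β' + 1) := rfl
  have hv2 : vv 2 = F2 ^ (γ' + 1) := rfl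
  -- C = -(A + B), and similarly for partial derivatives, after substitution
  have hgC : aeval vv Cp = -(aeval vv A + aeval vv B) := by
    have h0 := congrArg (aeval vv) hABC
    simp only [map_add, map_zero] at h0
    linear_combination h0
  have hCd : ∀ m : Fin 3, aeval vv (pderiv m Cp)
      = -(aeval vv (pderiv m A) + aeval vv (pderiv m B)) := by
    intro m
    have h0 := congrArg (fun P => aeval vv (pderiv m P)) hABC
    simp only [map_add, map_zero] at h0
    linear_combination h0
  -- Euler identities for A and B, after substitution
  have hEA := congrArg (aeval vv) (euler_id hA)
  have hEB := congrArg (aeval vv) (euler_id hB)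
  simp only [map_sum, map_add, map_mul, aeval_X, Fin.sum_univ_three, hv0, hv1, hv2,
    map_natCast] at hEA hEB
  -- expand all the derivatives in the goal
  simp only [etaCoeff, map_add, pderiv_mul, Derivation.map_natCast, zero_mul, mul_zero,
    add_zero, zero_add, chain_rule, Fin.sum_univ_three, ← hvv, hv0, hv1, hv2, pderiv_pow,
    Nat.add_sub_cancel]
  -- normalize second-order derivatives
  rw [pderiv_comm' j i F0, pderiv_comm' k i F0, pderiv_comm' k j F0,
    pderiv_comm' j i F1, pderiv_comm' k i F1, pderiv_comm' k j F1,
    pderiv_comm' j i F2, pderiv_comm' k i F2, pderiv_comm' k j F2]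
  -- eliminate C
  rw [hgC, hCd 0, hCd 1, hCd 2]
  -- the certificate
  linear_combination
    (((α' + 1 : ℕ) : MvPolynomial (Fin (n + 1)) ℂ) * ((β' + 1 : ℕ) : MvPolynomial (Fin (n + 1)) ℂ)
        * ((γ' + 1 : ℕ) : MvPolynomial (Fin (n + 1)) ℂ) * F0 * F1 * F2 *
      (pderiv i F0 * (pderiv j F1 * pderiv k F2 - pderiv k F1 * pderiv j F2)
        - pderiv i F1 * (pderiv j F0 * pderiv k F2 - pderiv k F0 * pderiv j F2)
        + pderiv i F2 * (pderiv j F0 * pderiv k F1 - pderiv k F0 * pderiv j F1))) *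
    (aeval vv B * hEA - aeval vv A * hEB)
end

section
/- With η₀, η₁, η₂ defined as below, define Ã₀ = γC − βB + βγ(Y·∂C/∂Y − Z·∂B/∂Z), Ã₁ = αA − γC + αγ(Z·∂A/∂Z − X·∂C/∂X), Ã₂ = βB − αA + αβ(X·∂B/∂X − Y·∂A/∂Y) in ℂ[X,Y,Z]. Then each Ã_i is homogeneous of degree d−1, and the curl of η satisfies: ∂η₂/∂x₁ − ∂η₁/∂x₂ = x₀·Ã₀(x₀^α, x₁^β, x₂^γ), ∂η₀/∂x₂ − ∂η₂/∂x₀ = x₁·Ã₁(x₀^α, x₁^β, x₂^γ), and ∂η₁/∂x₀ − ∂η₀/∂x₁ = x₂·Ã₂(x₀^α, x₁^β, x₂^γ). (Equivalently, dη = i_𝒵(dx₀∧dx₁∧dx₂) for the vector field 𝒵 with components 𝒵_i = x_i·Ã_i(x₀^α, x₁^β, x₂^γ).) -/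
open MvPolynomial

/-- Substitution of `x₀^α, x₁^β, x₂^γ` for the three variables of `P`. -/
noncomputable def substW (α β γ : ℕ) (P : MvPolynomial (Fin 3) ℂ) :
    MvPolynomial (Fin 3) ℂ :=
  aeval ![X 0 ^ α, X 1 ^ β, X 2 ^ γ] P

/-- The coefficients `η₀ = α·x₁x₂·A(x₀^α,x₁^β,x₂^γ)`,
`η₁ = β·x₀x₂·B(x₀^α,x₁^β,x₂^γ)`, `η₂ = γ·x₀x₁·C(x₀^α,x₁^β,x₂^γ)` of the local
1-form `η` of the pull-back foliation near an indeterminacy point. -/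
noncomputable def etaLocal (α β γ : ℕ) (A B Cp : MvPolynomial (Fin 3) ℂ) :
    Fin 3 → MvPolynomial (Fin 3) ℂ :=
  ![(α : MvPolynomial (Fin 3) ℂ) * X 1 * X 2 * substW α β γ A,
    (β : MvPolynomial (Fin 3) ℂ) * X 0 * X 2 * substW α β γ B,
    (γ : MvPolynomial (Fin 3) ℂ) * X 0 * X 1 * substW α β γ Cp]

/-- `Ã₀ = γC − βB + βγ(Y·∂C/∂Y − Z·∂B/∂Z)` (variables `X, Y, Z` are
`X 0, X 1, X 2`). -/
noncomputable def Atilde0 (α β γ : ℕ) (A B Cp : MvPolynomial (Fin 3) ℂ) :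
    MvPolynomial (Fin 3) ℂ :=
  (γ : MvPolynomial (Fin 3) ℂ) * Cp - (β : MvPolynomial (Fin 3) ℂ) * B +
    ((β * γ : ℕ) : MvPolynomial (Fin 3) ℂ) * (X 1 * pderiv 1 Cp - X 2 * pderiv 2 B)

/-- `Ã₁ = αA − γC + αγ(Z·∂A/∂Z − X·∂C/∂X)`. -/
noncomputable def Atilde1 (α β γ : ℕ) (A B Cp : MvPolynomial (Fin 3) ℂ) :
    MvPolynomial (Fin 3) ℂ :=
  (α : MvPolynomial (Fin 3) ℂ) * A - (γ : MvPolynomial (Fin 3) ℂ) * Cp +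
    ((α * γ : ℕ) : MvPolynomial (Fin 3) ℂ) * (X 2 * pderiv 2 A - X 0 * pderiv 0 Cp)

/-- `Ã₂ = βB − αA + αβ(X·∂B/∂X − Y·∂A/∂Y)`. -/
noncomputable def Atilde2 (α β γ : ℕ) (A B Cp : MvPolynomial (Fin 3) ℂ) :
    MvPolynomial (Fin 3) ℂ :=
  (β : MvPolynomial (Fin 3) ℂ) * B - (α : MvPolynomial (Fin 3) ℂ) * A +
    ((α * β : ℕ) : MvPolynomial (Fin 3) ℂ) * (X 0 * pderiv 0 B - X 1 * pderiv 1 A)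

/-- Chain rule for `aeval` with three variables. -/
lemma pderiv_aeval3 (f : Fin 3 → MvPolynomial (Fin 3) ℂ) (i : Fin 3) (P : MvPolynomial (Fin 3) ℂ) :
    pderiv i (aeval f P) = ∑ j : Fin 3, aeval f (pderiv j P) * pderiv i (f j) := by
  induction P using MvPolynomial.induction_on with
  | C a => simp
  | add p q hp hq =>
    rw [map_add, map_add, hp, hq, ← Finset.sum_add_distrib]
    exact Finset.sum_congr rfl fun k _ => by simp [add_mul]
  | mul_X p j hp =>
    rw [map_mul, aeval_X, pderiv_mul, hp]
    calc (∑ k : Fin 3, aeval f (pderiv k p) * pderiv i (f k)) * f j + aeval f p * pderiv i (f j)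
        = (∑ k : Fin 3, aeval f (pderiv k p) * f j * pderiv i (f k))
          + ∑ k : Fin 3, aeval (R := ℂ) f p * aeval (R := ℂ) f (pderiv k (X j)) * pderiv i (f k) := by
          rw [Finset.sum_mul]
          refine congrArg₂ (· + ·) ?_ ?_
          · exact Finset.sum_congr rfl fun k _ => by ring
          · rw [Fin.sum_univ_three]
            fin_cases j <;> simp [pderiv_X, Pi.single_apply]
      _ = ∑ k : Fin 3, aeval f (pderiv k (p * X j)) * pderiv i (f k) := by
          rw [← Finset.sum_add_distrib]
          refine Finset.sum_congr rfl fun k _ => ?_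
          rw [pderiv_mul, map_add, map_mul, map_mul, aeval_X]; ring

lemma X_mul_pderiv_isHomogeneous {P : MvPolynomial (Fin 3) ℂ} {n : ℕ}
    (h : P.IsHomogeneous n) (i : Fin 3) :
    ((X i : MvPolynomial (Fin 3) ℂ) * pderiv i P).IsHomogeneous n := by
  conv_lhs => rw [P.as_sum]
  rw [map_sum, Finset.mul_sum]
  refine IsHomogeneous.sum _ _ _ fun s hs => ?_
  rw [pderiv_monomial]
  by_cases h0 : s i = 0
  · rw [h0]; norm_num; exact isHomogeneous_zero _ _ _
  · have hdeg : s.degree = n := by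
      have := h (mem_support_iff.mp hs)
      rwa [Finsupp.degree_eq_weight_one]
    have hkey : Finsupp.single i 1 + (s - Finsupp.single i 1) = s := by
      ext j
      by_cases hj : i = j
      · subst hj
        simp [Finsupp.single_apply]
        omega
      · simp [Finsupp.single_apply, hj]
    rw [X, monomial_mul, one_mul, hkey]
    exact isHomogeneous_monomial _ hdeg

lemma natCast_mul_isHomogeneous {P : MvPolynomial (Fin 3) ℂ} {n : ℕ}
    (h : P.IsHomogeneous n) (k : ℕ) :
    (((k : ℕ) : MvPolynomial (Fin 3) ℂ) * P).IsHomogeneous n := by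
  have : ((k : ℕ) : MvPolynomial (Fin 3) ℂ) = C ((k : ℕ) : ℂ) := by
    simp
  rw [this]
  exact h.C_mul _

lemma substW_pderiv0 (α β γ : ℕ) (P : MvPolynomial (Fin 3) ℂ) :
    pderiv 0 (substW α β γ P) =
      (α : MvPolynomial (Fin 3) ℂ) * X 0 ^ (α - 1) * substW α β γ (pderiv 0 P) := by
  rw [substW, substW, pderiv_aeval3, Fin.sum_univ_three]
  simp only [Matrix.cons_val_zero, Matrix.cons_val_one, Matrix.head_cons,
    Matrix.cons_val_two, Matrix.tail_cons, pderiv_pow,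
    pderiv_X_self, pderiv_X_of_ne (show (1:Fin 3) ≠ 0 by decide),
    pderiv_X_of_ne (show (2:Fin 3) ≠ 0 by decide), mul_zero, zero_mul, add_zero, mul_one]
  ring

lemma substW_pderiv1 (α β γ : ℕ) (P : MvPolynomial (Fin 3) ℂ) :
    pderiv 1 (substW α β γ P) =
      (β : MvPolynomial (Fin 3) ℂ) * X 1 ^ (β - 1) * substW α β γ (pderiv 1 P) := by
  rw [substW, substW, pderiv_aeval3, Fin.sum_univ_three]
  simp only [Matrix.cons_val_zero, Matrix.cons_val_one, Matrix.head_cons,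
    Matrix.cons_val_two, Matrix.tail_cons, pderiv_pow,
    pderiv_X_self, pderiv_X_of_ne (show (0:Fin 3) ≠ 1 by decide),
    pderiv_X_of_ne (show (2:Fin 3) ≠ 1 by decide), mul_zero, zero_mul, add_zero, zero_add, mul_one]
  ring

lemma substW_pderiv2 (α β γ : ℕ) (P : MvPolynomial (Fin 3) ℂ) :
    pderiv 2 (substW α β γ P) =
      (γ : MvPolynomial (Fin 3) ℂ) * X 2 ^ (γ - 1) * substW α β γ (pderiv 2 P) := by
  rw [substW, substW, pderiv_aeval3, Fin.sum_univ_three]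
  simp only [Matrix.cons_val_zero, Matrix.cons_val_one, Matrix.head_cons,
    Matrix.cons_val_two, Matrix.tail_cons, pderiv_pow,
    pderiv_X_self, pderiv_X_of_ne (show (0:Fin 3) ≠ 2 by decide),
    pderiv_X_of_ne (show (1:Fin 3) ≠ 2 by decide), mul_zero, zero_mul, zero_add, mul_one]
  ring

lemma substW_add (α β γ : ℕ) (P Q : MvPolynomial (Fin 3) ℂ) :
    substW α β γ (P + Q) = substW α β γ P + substW α β γ Q := map_add _ _ _
lemma substW_sub (α β γ : ℕ) (P Q : MvPolynomial (Fin 3) ℂ) :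
    substW α β γ (P - Q) = substW α β γ P - substW α β γ Q := map_sub _ _ _
lemma substW_mul (α β γ : ℕ) (P Q : MvPolynomial (Fin 3) ℂ) :
    substW α β γ (P * Q) = substW α β γ P * substW α β γ Q := map_mul _ _ _
lemma substW_natCast (α β γ k : ℕ) :
    substW α β γ ((k : ℕ) : MvPolynomial (Fin 3) ℂ) = ((k : ℕ) : MvPolynomial (Fin 3) ℂ) :=
  map_natCast (aeval _) k

lemma substW_X0 (α β γ : ℕ) : substW α β γ (X 0) = X 0 ^ α := by simp [substW]
lemma substW_X1 (α β γ : ℕ) : substW α β γ (X 1) = X 1 ^ β := by simp [substW]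
lemma substW_X2 (α β γ : ℕ) : substW α β γ (X 2) = X 2 ^ γ := by simp [substW]

lemma pderiv_natC (i : Fin 3) (k : ℕ) :
    pderiv i ((k : ℕ) : MvPolynomial (Fin 3) ℂ) = 0 := by
  have h : ((k : ℕ) : MvPolynomial (Fin 3) ℂ) = C ((k : ℕ) : ℂ) := by simp
  rw [h]; exact pderiv_C

/-- each `Ã_i` is homogeneous of degree `d−1`, and the curl of
`η` is given by `dη = i_𝒵(dx₀∧dx₁∧dx₂)` with `𝒵_i = x_i·Ã_i(x₀^α,x₁^β,x₂^γ)`. -/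
theorem stmt_10 (d α β γ : ℕ) (hd : 2 ≤ d)
    (hα : 1 < α) (hαβ : α < β) (hβγ : β < γ)
    (A B Cp : MvPolynomial (Fin 3) ℂ)
    (hA : A.IsHomogeneous (d - 1)) (hB : B.IsHomogeneous (d - 1))
    (hC : Cp.IsHomogeneous (d - 1)) (hABC : A + B + Cp = 0) :
    (Atilde0 α β γ A B Cp).IsHomogeneous (d - 1) ∧
    (Atilde1 α β γ A B Cp).IsHomogeneous (d - 1) ∧
    (Atilde2 α β γ A B Cp).IsHomogeneous (d - 1) ∧
    pderiv 1 (etaLocal α β γ A B Cp 2) - pderiv 2 (etaLocal α β γ A B Cp 1) =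
      X 0 * substW α β γ (Atilde0 α β γ A B Cp) ∧
    pderiv 2 (etaLocal α β γ A B Cp 0) - pderiv 0 (etaLocal α β γ A B Cp 2) =
      X 1 * substW α β γ (Atilde1 α β γ A B Cp) ∧
    pderiv 0 (etaLocal α β γ A B Cp 1) - pderiv 1 (etaLocal α β γ A B Cp 0) =
      X 2 * substW α β γ (Atilde2 α β γ A B Cp) := by
  have hα1 : α - 1 + 1 = α := by omega
  have hβ1 : β - 1 + 1 = β := by omega
  have hγ1 : γ - 1 + 1 = γ := by omega
  have hXα : (X 0 : MvPolynomial (Fin 3) ℂ) * X 0 ^ (α - 1) = X 0 ^ α := by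
    rw [← pow_succ', hα1]
  have hXβ : (X 1 : MvPolynomial (Fin 3) ℂ) * X 1 ^ (β - 1) = X 1 ^ β := by
    rw [← pow_succ', hβ1]
  have hXγ : (X 2 : MvPolynomial (Fin 3) ℂ) * X 2 ^ (γ - 1) = X 2 ^ γ := by
    rw [← pow_succ', hγ1]
  have e0 : etaLocal α β γ A B Cp 0 =
      (α : MvPolynomial (Fin 3) ℂ) * X 1 * X 2 * substW α β γ A := rfl
  have e1 : etaLocal α β γ A B Cp 1 =
      (β : MvPolynomial (Fin 3) ℂ) * X 0 * X 2 * substW α β γ B := rfl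
  have e2 : etaLocal α β γ A B Cp 2 =
      (γ : MvPolynomial (Fin 3) ℂ) * X 0 * X 1 * substW α β γ Cp := rfl
  refine ⟨?_, ?_, ?_, ?_, ?_, ?_⟩
  · exact ((natCast_mul_isHomogeneous hC γ).sub (natCast_mul_isHomogeneous hB β)).add
      (natCast_mul_isHomogeneous
        ((X_mul_pderiv_isHomogeneous hC 1).sub (X_mul_pderiv_isHomogeneous hB 2)) (β * γ))
  · exact ((natCast_mul_isHomogeneous hA α).sub (natCast_mul_isHomogeneous hC γ)).add
      (natCast_mul_isHomogeneous
        ((X_mul_pderiv_isHomogeneous hA 2).sub (X_mul_pderiv_isHomogeneous hC 0)) (α * γ))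
  · exact ((natCast_mul_isHomogeneous hB β).sub (natCast_mul_isHomogeneous hA α)).add
      (natCast_mul_isHomogeneous
        ((X_mul_pderiv_isHomogeneous hB 0).sub (X_mul_pderiv_isHomogeneous hA 1)) (α * β))
  · rw [e1, e2, Atilde0]
    simp only [substW_add, substW_sub, substW_mul, substW_natCast, substW_X1, substW_X2]
    simp only [pderiv_mul, substW_pderiv1, substW_pderiv2,
      pderiv_X_self, pderiv_X_of_ne (show (0:Fin 3) ≠ 1 by decide),
      pderiv_X_of_ne (show (0:Fin 3) ≠ 2 by decide),
      pderiv_X_of_ne (show (1:Fin 3) ≠ 2 by decide),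
      pderiv_X_of_ne (show (2:Fin 3) ≠ 1 by decide),
      pderiv_natC, mul_zero, zero_mul, zero_add, add_zero, mul_one]
    rw [← hXβ, ← hXγ]
    push_cast
    ring
  · rw [e0, e2, Atilde1]
    simp only [substW_add, substW_sub, substW_mul, substW_natCast, substW_X0, substW_X2]
    simp only [pderiv_mul, substW_pderiv0, substW_pderiv2,
      pderiv_X_self, pderiv_X_of_ne (show (2:Fin 3) ≠ 0 by decide),
      pderiv_X_of_ne (show (1:Fin 3) ≠ 0 by decide),
      pderiv_X_of_ne (show (0:Fin 3) ≠ 2 by decide),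
      pderiv_X_of_ne (show (1:Fin 3) ≠ 2 by decide),
      pderiv_natC, mul_zero, zero_mul, zero_add, add_zero, mul_one]
    rw [← hXα, ← hXγ]
    push_cast
    ring
  · rw [e0, e1, Atilde2]
    simp only [substW_add, substW_sub, substW_mul, substW_natCast, substW_X0, substW_X1]
    simp only [pderiv_mul, substW_pderiv0, substW_pderiv1,
      pderiv_X_self, pderiv_X_of_ne (show (1:Fin 3) ≠ 0 by decide),
      pderiv_X_of_ne (show (2:Fin 3) ≠ 0 by decide),
      pderiv_X_of_ne (show (0:Fin 3) ≠ 1 by decide),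
      pderiv_X_of_ne (show (2:Fin 3) ≠ 1 by decide),
      pderiv_natC, mul_zero, zero_mul, zero_add, add_zero, mul_one]
    rw [← hXα, ← hXβ]
    push_cast
    ring
end
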